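/- Let 𝒮 ⊆ 2^V be separator-free, let σ be a contiguous ordering of V to 𝒮, and let X ⊆ V be a maximal set of elements that are pairwise equivalent (u, v are equivalent if every S ∈ 𝒮 contains both or neither). Then the elements of X appear consecutively in σ. -/
import Mathlib


/-- `S` occupies consecutive positions in the ordering `σ`. -/
def IsIntervalIn {V : Type*} {n : ℕ} (σ : Fin n ≃ V) (S : Set V) : Prop :=
  ∀ i j k : Fin n, i ≤ j → j ≤ k → σ i ∈ S → σ k ∈ S → σ j ∈ S

/-- `σ` is a contiguous ordering of `V` to `𝒮`. -/
def ContiguousOrd {V : Type*} {n : ℕ} (σ : Fin n ≃ V) (𝒮 : Set (Set V)) : Prop :=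
  (∀ S ∈ 𝒮, IsIntervalIn σ S) ∧
  ∀ S ∈ 𝒮, ∀ S' ∈ 𝒮, S ⊆ S' →
    ∀ i j : Fin n, σ i ∈ S' → σ j ∈ S' → (∀ k : Fin n, σ k ∈ S' → i ≤ k ∧ k ≤ j) →
      (σ i ∈ S ∨ σ j ∈ S)

/-- `C` is a separator of `𝒮`: a nonempty proper subset of `V` such that every member
of `𝒮` is a subset of `C` or disjoint from `C`. -/
def IsSeparator {V : Type*} (𝒮 : Set (Set V)) (C : Set V) : Prop :=
  C.Nonempty ∧ C ≠ Set.univ ∧ ∀ S ∈ 𝒮, S ⊆ C ∨ Disjoint S C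

def SeparatorFree {V : Type*} (𝒮 : Set (Set V)) : Prop :=
  ¬ ∃ C : Set V, IsSeparator 𝒮 C

/-- `u` and `v` are equivalent for `𝒮`: every member contains both or neither. -/
def EquivElem {V : Type*} (𝒮 : Set (Set V)) (u v : V) : Prop :=
  ∀ S ∈ 𝒮, (u ∈ S ↔ v ∈ S)

/-- For a separator-free family, the elements of a maximal set of pairwise equivalent
elements appear consecutively in any contiguous ordering. -/
theorem equiv_class_consecutive_in_contiguous
    {V : Type*} [Fintype V] {n : ℕ} (hn : n = Fintype.card V)
    (𝒮 : Set (Set V)) (hne : ∅ ∉ 𝒮) (hsf : SeparatorFree 𝒮)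
    (σ : Fin n ≃ V) (hσ : ContiguousOrd σ 𝒮)
    (X : Set V) (hXne : X.Nonempty)
    (hXeq : ∀ u ∈ X, ∀ v ∈ X, EquivElem 𝒮 u v)
    (hXmax : ∀ Y : Set V, X ⊆ Y → (∀ u ∈ Y, ∀ v ∈ Y, EquivElem 𝒮 u v) → Y = X) :
    IsIntervalIn σ X := by
  classical
  intro i j k hij hjk hi hk
  rcases eq_or_lt_of_le hij with rfl | hij
  · exact hi
  rcases eq_or_lt_of_le hjk with rfl | hjk
  · exact hk
  have hik : EquivElem 𝒮 (σ i) (σ k) := hXeq _ hi _ hk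
  have key : ∀ S ∈ 𝒮, (σ j ∈ S ↔ σ i ∈ S) := by
    intro S hS
    constructor
    · intro hjS
      by_contra hiS
      have hkS : σ k ∉ S := fun h => hiS ((hik S hS).mpr h)
      have hstrip : ∀ w ∈ S, i < σ.symm w ∧ σ.symm w < k := by
        intro w hw
        constructor
        · by_contra h
          push_neg at h
          exact hiS (hσ.1 S hS (σ.symm w) i j h hij.le (by simpa using hw) hjS)
        · by_contra h
          push_neg at h
          exact hkS (hσ.1 S hS j k (σ.symm w) hjk.le h hjS (by simpa using hw))
      set C : Set V :=
        {v | ∃ S' ∈ 𝒮, (∀ w ∈ S', i < σ.symm w ∧ σ.symm w < k) ∧ v ∈ S'} with hCdef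
      apply hsf
      refine ⟨C, ⟨σ j, ⟨S, hS, hstrip, hjS⟩⟩, ?_, ?_⟩
      · intro h
        have hiC : σ i ∈ C := h ▸ Set.mem_univ _
        obtain ⟨S', _, hstr, hmem⟩ := hiC
        have := (hstr _ hmem).1
        simp at this
      · intro T hT
        by_cases hTs : ∀ w ∈ T, i < σ.symm w ∧ σ.symm w < k
        · exact Or.inl fun v hv => ⟨T, hT, hTs, hv⟩
        · right
          rw [Set.disjoint_left]
          rintro v hvT ⟨S', hS', hstr', hvS'⟩
          push_neg at hTs
          obtain ⟨w, hwT, hw⟩ := hTs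
          have hp := hstr' v hvS'
          have hiT : σ i ∈ T ∧ σ k ∈ T := by
            by_cases hle : σ.symm w ≤ i
            · have h1 : σ i ∈ T :=
                hσ.1 T hT (σ.symm w) i (σ.symm v) hle hp.1.le (by simpa using hwT)
                  (by simpa using hvT)
              exact ⟨h1, (hik T hT).mp h1⟩
            · push_neg at hle
              have hk' : k ≤ σ.symm w := hw hle
              have h2 : σ k ∈ T :=
                hσ.1 T hT (σ.symm v) k (σ.symm w) hp.2.le hk' (by simpa using hvT)
                  (by simpa using hwT)
              exact ⟨(hik T hT).mpr h2, h2⟩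
          have hsub : S' ⊆ T := by
            intro x hx
            have h := hstr' x hx
            have := hσ.1 T hT i (σ.symm x) k h.1.le h.2.le hiT.1 hiT.2
            simpa using this
          have hne' : (Finset.univ.filter (fun q => σ q ∈ T)).Nonempty :=
            ⟨i, by simp [hiT.1]⟩
          set F := Finset.univ.filter (fun q => σ q ∈ T) with hF
          set a := F.min' hne' with ha
          set b := F.max' hne' with hb
          have haT : σ a ∈ T := by
            have := F.min'_mem hne'
            simpa [hF] using this
          have hbT : σ b ∈ T := by
            have := F.max'_mem hne'
            simpa [hF] using this
          have hbetween : ∀ q : Fin n, σ q ∈ T → a ≤ q ∧ q ≤ b := by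
            intro q hq
            have hqF : q ∈ F := by simp [hF, hq]
            exact ⟨F.min'_le q hqF, F.le_max' q hqF⟩
          have hends := hσ.2 S' hS' T hT hsub a b haT hbT hbetween
          have hai : a ≤ i := (hbetween i hiT.1).1
          have hkb : k ≤ b := (hbetween k hiT.2).2
          rcases hends with h | h
          · have h' := (hstr' _ h).1
            simp at h'
            exact absurd h' (not_lt.mpr hai)
          · have h' := (hstr' _ h).2
            simp at h'
            exact absurd h' (not_lt.mpr hkb)
    · intro hiS
      exact hσ.1 S hS i j k hij.le hjk.le hiS ((hik S hS).mp hiS)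
  have hjx : ∀ x ∈ X, EquivElem 𝒮 (σ j) x := fun x hx S hS =>
    (key S hS).trans (hXeq _ hi _ hx S hS)
  have hY : insert (σ j) X = X := by
    apply hXmax _ (Set.subset_insert _ _)
    intro u hu v hv S hS
    rcases Set.mem_insert_iff.mp hu with rfl | hu <;>
      rcases Set.mem_insert_iff.mp hv with rfl | hv
    · exact Iff.rfl
    · exact hjx v hv S hS
    · exact (hjx u hu S hS).symm
    · exact hXeq u hu v hv S hS
  rw [← hY]
  exact Set.mem_insert _ _
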